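/- arXiv:1906.06367 — 4 statements merged into one kernel-verified Lean document; each statement's English description precedes it below -/
import Mathlib

section
/- Let k be a field. In the product ring B = k[[t]] × k[[t]], the smallest t-adically closed k-subalgebra R containing x = (t, t) and y = (t^3, 0) equals {(f, g) ∈ B : f ≡ g mod t^3}, i.e. pairs of power series whose coefficients of t^0, t^1, t^2 agree. Consequently dim_k(B/R) = 3 (the oscnode/A_5-singularity has δ-invariant 3, hence genus 2 with 2 branches). -/
open PowerSeries

variable (k : Type*) [Field k]

/-- The subspace of `k[[t]] × k[[t]]` of pairs of power series whose coefficients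
agree in all degrees `< n`. For `n = 3` this is the oscnode (A₅) algebra. -/
noncomputable def agree (n : ℕ) : Submodule k (PowerSeries k × PowerSeries k) where
  carrier := {p | ∀ i < n, coeff i p.1 = coeff i p.2}
  add_mem' := by
    intro a b ha hb i hi
    simp [ha i hi, hb i hi]
  zero_mem' := by intro i hi; simp
  smul_mem' := by
    intro c p hp i hi
    simp [hp i hi]

noncomputable def agreeAlg : Subalgebra k (PowerSeries k × PowerSeries k) where
  carrier := {p | ∀ i < 3, coeff i p.1 = coeff i p.2}
  mul_mem' := by
    intro a b ha hb i hi
    simp only [Set.mem_setOf_eq] at *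
    simp only [Prod.fst_mul, Prod.snd_mul, coeff_mul]
    refine Finset.sum_congr rfl fun x hx => ?_
    replace hx : x.1 + x.2 = i := Finset.HasAntidiagonal.mem_antidiagonal.mp hx
    rw [ha x.1 (by omega), hb x.2 (by omega)]
  one_mem' := by intro i hi; rfl
  add_mem' := by
    intro a b ha hb i hi
    simp only [Set.mem_setOf_eq] at *
    simp [ha i hi, hb i hi]
  zero_mem' := by intro i hi; rfl
  algebraMap_mem' := by intro r i hi; rfl

lemma adjoin_le_agreeAlg :
    Algebra.adjoin k
      ({((X, X) : PowerSeries k × PowerSeries k),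
        ((X ^ 3, 0) : PowerSeries k × PowerSeries k)} : Set (PowerSeries k × PowerSeries k))
      ≤ agreeAlg k := by
  apply Algebra.adjoin_le
  rintro p (rfl | rfl)
  · intro i hi; rfl
  · intro i hi
    simp only [Set.mem_setOf_eq]
    rw [coeff_X_pow]
    simp only [map_zero]
    rw [if_neg (by omega)]

noncomputable def phi : (PowerSeries k × PowerSeries k) →ₗ[k] (Fin 3 → k) where
  toFun p i := coeff i p.1 - coeff i p.2
  map_add' a b := by
    funext i
    simp only [Prod.fst_add, Prod.snd_add, map_add, Pi.add_apply]
    ring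
  map_smul' c p := by
    funext i
    simp only [Prod.smul_fst, Prod.smul_snd, map_smul, RingHom.id_apply, Pi.smul_apply,
      smul_eq_mul]
    ring

lemma agree_eq_ker : agree k 3 = LinearMap.ker (phi k) := by
  ext p
  constructor
  · intro h
    simp only [LinearMap.mem_ker, phi, LinearMap.coe_mk, AddHom.coe_mk]
    funext i
    have := h i i.isLt
    simp [this]
  · intro h i hi
    simp only [LinearMap.mem_ker, phi, LinearMap.coe_mk, AddHom.coe_mk] at h
    have := congrFun h ⟨i, hi⟩
    simpa [sub_eq_zero] using this

lemma phi_surj : Function.Surjective (phi k) := by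
  intro v
  refine ⟨(PowerSeries.mk fun i => if h : i < 3 then v ⟨i, h⟩ else 0, 0), ?_⟩
  funext i
  simp [phi, coeff_mk, i.isLt]

/-- the t-adic closure of the `k`-subalgebra of `k[[t]] × k[[t]]`
generated by `x = (t,t)` and `y = (t³,0)` is exactly the set of pairs of power
series agreeing modulo `t³`, and the quotient has dimension 3 (the oscnode has
δ-invariant 3, hence genus 2 with 2 branches). -/
theorem stmt_3 :
    ({p : PowerSeries k × PowerSeries k | ∀ n : ℕ,
        ∃ q ∈ Algebra.adjoin k
          ({((X, X) : PowerSeries k × PowerSeries k),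
            ((X ^ 3, 0) : PowerSeries k × PowerSeries k)} : Set (PowerSeries k × PowerSeries k)),
          ∀ i < n, coeff i (p.1 - q.1) = 0 ∧ coeff i (p.2 - q.2) = 0}
      = (agree k 3 : Set (PowerSeries k × PowerSeries k))) ∧
    Module.finrank k ((PowerSeries k × PowerSeries k) ⧸ agree k 3) = 3 := by
  constructor
  · ext p
    simp only [Set.mem_setOf_eq, SetLike.mem_coe]
    constructor
    · intro h
      obtain ⟨q, hq, hcoe⟩ := h 3
      intro i hi
      have h1 := (hcoe i hi).1
      have h2 := (hcoe i hi).2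
      rw [map_sub, sub_eq_zero] at h1 h2
      have hq3 : coeff i q.1 = coeff i q.2 := adjoin_le_agreeAlg k hq i hi
      rw [h1, h2, hq3]
    · intro hp n
      have hp' : ∀ i < 3, coeff i p.1 = coeff i p.2 := hp
      set A := Algebra.adjoin k
        ({((X, X) : PowerSeries k × PowerSeries k),
          ((X ^ 3, 0) : PowerSeries k × PowerSeries k)} : Set (PowerSeries k × PowerSeries k))
      have hx : ((X, X) : PowerSeries k × PowerSeries k) ∈ A :=
        Algebra.subset_adjoin (by simp)
      have hy : ((X ^ 3, 0) : PowerSeries k × PowerSeries k) ∈ A :=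
        Algebra.subset_adjoin (by simp)
      set q : PowerSeries k × PowerSeries k :=
        (∑ j ∈ Finset.range n, coeff j p.2 • ((X, X) : PowerSeries k × PowerSeries k) ^ j)
        + (∑ j ∈ Finset.range n, if 3 ≤ j then
            (coeff j p.1 - coeff j p.2) •
              (((X ^ 3, 0) : PowerSeries k × PowerSeries k) * ((X, X) : PowerSeries k × PowerSeries k) ^ (j - 3))
          else 0) with hqdef
      have hqA : q ∈ A := by
        apply add_mem
        · exact Subalgebra.sum_mem _ fun j _ =>
            Subalgebra.smul_mem _ (pow_mem hx j) _
        · refine Subalgebra.sum_mem _ fun j _ => ?_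
          split_ifs
          · exact Subalgebra.smul_mem _ (mul_mem hy (pow_mem hx _)) _
          · exact zero_mem _
      refine ⟨q, hqA, ?_⟩
      intro i hi
      have hq1 : q.1 = (∑ j ∈ Finset.range n, coeff j p.2 • (X : PowerSeries k) ^ j)
          + (∑ j ∈ Finset.range n, if 3 ≤ j then
              (coeff j p.1 - coeff j p.2) • ((X : PowerSeries k) ^ 3 * X ^ (j - 3))
            else 0) := by
        rw [hqdef]
        simp [Prod.fst_sum, apply_ite Prod.fst]
      have hq2 : q.2 = (∑ j ∈ Finset.range n, coeff j p.2 • (X : PowerSeries k) ^ j) := by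
        rw [hqdef]
        simp [Prod.snd_sum, apply_ite Prod.snd]
      have hc2 : coeff i q.2 = coeff i p.2 := by
        rw [hq2, map_sum]
        rw [Finset.sum_eq_single i]
        · simp
        · intro j _ hj
          simp [coeff_X_pow, Ne.symm hj]
        · intro hni; exact absurd hi (by simpa using hni)
      have hc1 : coeff i q.1 = coeff i p.1 := by
        rw [hq1, map_add, map_sum, map_sum]
        have e1 : (∑ j ∈ Finset.range n, coeff i (coeff j p.2 • (X : PowerSeries k) ^ j))
            = coeff i p.2 := by
          rw [Finset.sum_eq_single i]
          · simp
          · intro j _ hj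
            simp [coeff_X_pow, Ne.symm hj]
          · intro hni; exact absurd hi (by simpa using hni)
        have step : ∀ j ∈ Finset.range n, coeff i (if 3 ≤ j then
              (coeff j p.1 - coeff j p.2) • ((X : PowerSeries k) ^ 3 * X ^ (j - 3))
            else 0)
            = if 3 ≤ j then (coeff j p.1 - coeff j p.2) * (if i = j then 1 else 0)
              else 0 := by
          intro j _
          by_cases h3 : 3 ≤ j
          · rw [if_pos h3, if_pos h3,
              show (X : PowerSeries k) ^ 3 * X ^ (j - 3) = X ^ j by
                rw [← pow_add]; congr 1; omega,
              map_smul, coeff_X_pow, smul_eq_mul]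
          · rw [if_neg h3, if_neg h3, map_zero]
        have e2 : (∑ j ∈ Finset.range n, coeff i (if 3 ≤ j then
              (coeff j p.1 - coeff j p.2) • ((X : PowerSeries k) ^ 3 * X ^ (j - 3))
            else 0))
            = if 3 ≤ i then coeff i p.1 - coeff i p.2 else 0 := by
          rw [Finset.sum_congr rfl step]
          rw [Finset.sum_eq_single i]
          · by_cases h3 : 3 ≤ i
            · rw [if_pos h3, if_pos h3, if_pos rfl, mul_one]
            · rw [if_neg h3, if_neg h3]
          · intro j _ hj
            by_cases h3 : 3 ≤ j
            · rw [if_pos h3, if_neg (Ne.symm hj), mul_zero]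
            · rw [if_neg h3]
          · intro hni; exact absurd hi (by simpa using hni)
        rw [e1, e2]
        split_ifs with h3
        · ring
        · rw [hp' i (by omega)]; ring
      rw [map_sub, map_sub, hc1, hc2, sub_self, sub_self]
      exact ⟨rfl, rfl⟩
  · rw [agree_eq_ker]
    rw [LinearEquiv.finrank_eq (phi k).quotKerEquivRange,
      LinearMap.range_eq_top.mpr (phi_surj k), finrank_top]
    simp
end

section
/- Let k be a field of characteristic 0 (or characteristic ∉ {2,5}). A continuous k-derivation D = f(t)·d/dt of k[[t]] maps the ramphoid cusp algebra R = k ⊕ k·t^2 ⊕ t^4 k[[t]] into itself if and only if the coefficients of t^0 and t^2 in f vanish. -/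
open PowerSeries

variable (k : Type*) [Field k]

/-- The ramphoid cusp algebra `k ⊕ k·t² ⊕ t⁴·k[[t]] = k[[t²,t⁵]]`. -/
noncomputable def ramphoid : Submodule k (PowerSeries k) :=
  LinearMap.ker (coeff (R := k) 1) ⊓ LinearMap.ker (coeff (R := k) 3)

private lemma cf1 (f g : PowerSeries k) :
    coeff (R := k) 1 (f*g) = coeff (R := k) 0 f * coeff (R := k) 1 g + coeff (R := k) 1 f * coeff (R := k) 0 g := by
  rw [coeff_mul, Finset.Nat.sum_antidiagonal_eq_sum_range_succ_mk]
  simp [Finset.sum_range_succ]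

private lemma cf3 (f g : PowerSeries k) :
    coeff (R := k) 3 (f*g) = coeff (R := k) 0 f * coeff (R := k) 3 g + coeff (R := k) 1 f * coeff (R := k) 2 g
      + coeff (R := k) 2 f * coeff (R := k) 1 g + coeff (R := k) 3 f * coeff (R := k) 0 g := by
  rw [coeff_mul, Finset.Nat.sum_antidiagonal_eq_sum_range_succ_mk]
  simp [Finset.sum_range_succ]

private lemma coeff_dF (g : PowerSeries k) (n : ℕ) :
    coeff (R := k) n (derivativeFun g) = coeff (n + 1) g * (n + 1) :=
  coeff_derivative g n

/-- for char(k) ∉ {2,5}, the continuous derivation `f·d/dt` of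
`k[[t]]` preserves the ramphoid cusp algebra iff the coefficients of `t⁰` and
`t²` in `f` vanish. -/
theorem stmt_8 (h2 : (2 : k) ≠ 0) (h5 : (5 : k) ≠ 0) (f : PowerSeries k) :
    (∀ g ∈ ramphoid k, f * derivativeFun g ∈ ramphoid k) ↔
      (coeff (R := k) 0 f = 0 ∧ coeff (R := k) 2 f = 0) := by
  constructor
  · intro h
    have hX : (X^2 : PowerSeries k) ∈ ramphoid k := by
      simp [ramphoid, Submodule.mem_inf, coeff_X_pow]
    have h1 := h _ hX
    simp only [ramphoid, Submodule.mem_inf, LinearMap.mem_ker] at h1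
    obtain ⟨e1, e3⟩ := h1
    rw [cf1] at e1
    rw [cf3] at e3
    simp only [coeff_dF, coeff_X_pow] at e1 e3
    norm_num at e1 e3
    refine ⟨?_, e3.resolve_right h2⟩
    rw [coeff_zero_eq_constantCoeff]
    exact e1.resolve_right h2
  · rintro ⟨hf0, hf2⟩ g hg
    simp only [ramphoid, Submodule.mem_inf, LinearMap.mem_ker] at hg ⊢
    obtain ⟨hg1, hg3⟩ := hg
    constructor
    · rw [cf1]
      simp only [coeff_dF]
      have : coeff (R := k) (0+1) g = 0 := hg1
      rw [hf0, this]
      ring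
    · rw [cf3]
      simp only [coeff_dF]
      have h1 : coeff (R := k) (0+1) g = 0 := hg1
      have h3 : coeff (R := k) (2+1) g = 0 := hg3
      rw [hf0, hf2, h1, h3]
      ring
end

section
/- Let k be a field of characteristic ≠ 2, and let φ be a continuous k-algebra automorphism of k[[t]] with φ(t) = a1·t + a2·t^2 + a3·t^3 + ... (a1 ∈ k×). Then φ maps the ramphoid cusp algebra R = k ⊕ k·t^2 ⊕ t^4 k[[t]] into itself if and only if a2 = 0. -/
open PowerSeries

variable (k : Type*) [Field k]

/-- Substitution `g ↦ g(u)` for a power series `u` with zero constant term: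
the `m`-th coefficient of `g(u)` only involves the terms of `g` of degree ≤ `m`. -/
noncomputable def subst (u g : PowerSeries k) : PowerSeries k :=
  PowerSeries.mk fun m =>
    coeff (R := k) m (∑ n ∈ Finset.range (m + 1), coeff (R := k) n g • u ^ n)

lemma coeff3_sq (u : PowerSeries k) (hu0 : coeff (R := k) 0 u = 0) :
    coeff (R := k) 3 (u ^ 2) = 2 * (coeff (R := k) 1 u * coeff (R := k) 2 u) := by
  rw [pow_two, coeff_mul, Finset.Nat.sum_antidiagonal_eq_sum_range_succ_mk]
  simp [Finset.sum_range_succ, hu0]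
  ring

/-- for char(k) ≠ 2, a continuous automorphism of `k[[t]]` given by
`t ↦ u = a₁t + a₂t² + ⋯` (`a₁ ≠ 0`) preserves the ramphoid cusp algebra iff
`a₂ = 0`. -/
theorem stmt_10 (h2 : (2 : k) ≠ 0) (u : PowerSeries k)
    (hu0 : coeff (R := k) 0 u = 0) (hu1 : coeff (R := k) 1 u ≠ 0) :
    (∀ g ∈ ramphoid k, subst k u g ∈ ramphoid k) ↔ coeff (R := k) 2 u = 0 := by
  constructor
  · intro h
    have hmem : (X : PowerSeries k) ^ 2 ∈ ramphoid k := by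
      simp [ramphoid, Submodule.mem_inf, LinearMap.mem_ker, coeff_X_pow]
    have h3 := (Submodule.mem_inf.mp (h _ hmem)).2
    rw [LinearMap.mem_ker] at h3
    rw [_root_.subst, coeff_mk] at h3
    simp only [Finset.sum_range_succ, Finset.sum_range_zero, coeff_X_pow] at h3
    norm_num at h3
    rw [coeff3_sq k u hu0] at h3
    rcases mul_eq_zero.mp h3 with h | h
    · exact absurd h h2
    · rcases mul_eq_zero.mp h with h | h
      · exact absurd h hu1
      · exact h
  · intro ha2 g hg
    obtain ⟨h1, h3⟩ := Submodule.mem_inf.mp hg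
    rw [LinearMap.mem_ker] at h1 h3
    have hsq : coeff (R := k) 3 (u ^ 2) = 0 := by
      rw [coeff3_sq k u hu0, ha2, mul_zero, mul_zero]
    refine Submodule.mem_inf.mpr ⟨LinearMap.mem_ker.mpr ?_, LinearMap.mem_ker.mpr ?_⟩
    · rw [_root_.subst, coeff_mk]
      simp [Finset.sum_range_succ, h1]
    · rw [_root_.subst, coeff_mk]
      simp [Finset.sum_range_succ, h1, h3, hsq]
end

section
/- Let T be a finite rooted tree with root ρ, let d: V(T) → ℕ and κ: V(T) → ℕ be functions with d(v) ≥ 1 for every leaf v ≠ ρ. Suppose that for every non-root vertex v, the balancing equation Σ_{w adjacent to v} (d(w) − d(v) + 1) + κ(v)·(1 − d(v)) = 2 holds (the sum is over the parent and all children of v). Then for every non-root vertex v one has d(v) ≥ 1 and d(parent(v)) > d(v); in particular d is strictly increasing along every path toward the root. -/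
/-- on a finite rooted tree (given by a parent function `p` with
root `ρ`), with multiplicities `d` and leg counts `κ`, if `d ≥ 1` on leaves and
the balancing equation
`Σ_{w adjacent to v} (d w − d v + 1) + κ v · (1 − d v) = 2`
holds at every non-root vertex, then `d v ≥ 1` and `d (p v) > d v` for every
non-root vertex: `d` strictly increases toward the root. -/
theorem stmt_15 (V : Type*) [Fintype V] [DecidableEq V]
    (ρ : V) (p : V → V) (hroot : p ρ = ρ)
    (hreach : ∀ v : V, ∃ n : ℕ, p^[n] v = ρ)
    (hne : ∀ v : V, v ≠ ρ → p v ≠ v)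
    (d κ : V → ℕ)
    (hleaf : ∀ v : V, v ≠ ρ →
      (Finset.univ.filter (fun w => w ≠ ρ ∧ p w = v)) = ∅ → 1 ≤ d v)
    (hbal : ∀ v : V, v ≠ ρ →
      (((d (p v) : ℤ) - d v + 1) +
        ∑ w ∈ Finset.univ.filter (fun w => w ≠ ρ ∧ p w = v),
          ((d w : ℤ) - d v + 1)) +
        (κ v : ℤ) * (1 - (d v : ℤ)) = 2) :
    ∀ v : V, v ≠ ρ → 1 ≤ d v ∧ (d v : ℤ) < d (p v) := by
  classical
  -- depth of a vertex: minimal number of parent steps to reach the root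
  have hdepth_lt : ∀ v : V, Nat.find (hreach v) < Fintype.card V := by
    intro v
    set D := Nat.find (hreach v) with hD
    have hinj : Function.Injective (fun i : Fin (D + 1) => p^[(i : ℕ)] v) := by
      intro i j hij
      simp only at hij
      by_contra hij'
      -- wlog i < j
      have key : ∀ a b : Fin (D + 1), (a : ℕ) < (b : ℕ) →
          p^[(a : ℕ)] v = p^[(b : ℕ)] v → False := by
        intro a b hab heq
        have hbD : (b : ℕ) ≤ D := Nat.lt_succ_iff.mp b.isLt
        have hiter : p^[D - (b : ℕ) + (a : ℕ)] v = ρ := by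
          have h1 : p^[D - (b : ℕ) + (b : ℕ)] v = ρ := by
            rw [Nat.sub_add_cancel hbD]
            exact Nat.find_spec (hreach v)
          rw [Function.iterate_add_apply] at h1 ⊢
          rw [heq]
          exact h1
        exact Nat.find_min (hreach v) (by omega) hiter
      rcases lt_trichotomy (i : ℕ) (j : ℕ) with h | h | h
      · exact key i j h hij
      · exact hij' (Fin.ext h)
      · exact key j i h hij.symm
    have := Fintype.card_le_of_injective _ hinj
    simpa using this
  have main : ∀ k : ℕ, ∀ v : V, v ≠ ρ →
      Fintype.card V - Nat.find (hreach v) ≤ k →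
      1 ≤ d v ∧ (d v : ℤ) < d (p v) := by
    intro k
    induction k with
    | zero =>
      intro v hv hm
      exact absurd hm (by have := hdepth_lt v; omega)
    | succ k ih =>
      intro v hv hm
      have hchild : ∀ w ∈ Finset.univ.filter (fun w => w ≠ ρ ∧ p w = v),
          1 ≤ d w ∧ (d w : ℤ) < d v := by
        intro w hw
        rw [Finset.mem_filter] at hw
        obtain ⟨-, hwρ, hpw⟩ := hw
        -- depth w = depth v + 1
        have h1 : Nat.find (hreach w) ≤ Nat.find (hreach v) + 1 := by
          apply Nat.find_le
          rw [Function.iterate_succ_apply, hpw]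
          exact Nat.find_spec (hreach v)
        have h2 : Nat.find (hreach v) + 1 ≤ Nat.find (hreach w) := by
          by_contra h
          push_neg at h
          have hw1 : 1 ≤ Nat.find (hreach w) := by
            rcases Nat.eq_zero_or_pos (Nat.find (hreach w)) with h0 | h0
            · have := Nat.find_spec (hreach w)
              rw [h0] at this
              exact absurd this hwρ
            · exact h0
          have hρ : p^[Nat.find (hreach w) - 1] v = ρ := by
            have hs := Nat.find_spec (hreach w)
            rw [show Nat.find (hreach w) = (Nat.find (hreach w) - 1) + 1 by omega,
              Function.iterate_succ_apply, hpw] at hs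
            exact hs
          exact Nat.find_min (hreach v) (by omega) hρ
        have hdw := hdepth_lt w
        have hdv := hdepth_lt v
        have := ih w hwρ (by omega)
        rw [hpw] at this
        exact this
      have hdv1 : 1 ≤ d v := by
        rcases eq_or_ne (Finset.univ.filter (fun w => w ≠ ρ ∧ p w = v)) ∅ with hC | hC
        · exact hleaf v hv hC
        · obtain ⟨w, hw⟩ := Finset.nonempty_iff_ne_empty.mpr hC
          obtain ⟨h1, h2⟩ := hchild w hw
          omega
      refine ⟨hdv1, ?_⟩
      have hsum : ∑ w ∈ Finset.univ.filter (fun w => w ≠ ρ ∧ p w = v),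
          ((d w : ℤ) - d v + 1) ≤ 0 := by
        apply Finset.sum_nonpos
        intro w hw
        obtain ⟨h1, h2⟩ := hchild w hw
        omega
      have hκ : (κ v : ℤ) * (1 - (d v : ℤ)) ≤ 0 := by
        apply mul_nonpos_of_nonneg_of_nonpos
        · positivity
        · omega
      have hb := hbal v hv
      linarith
  intro v hv
  exact main (Fintype.card V) v hv (by omega)
end
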